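/- For any Clifford matrix G, the support of G is contained in the symplectic dual of C_G, where C_G = {c ∈ F_2^{2m} : G E(c) G† = E(c)} is the set of Paulis commuting with G; that is, if c ∈ F_2^{2m} satisfies Tr(G E(c)) ≠ 0, then ⟨c, v⟩_s = 0 for all v ∈ C_G. -/
import Mathlib


open Matrix
open scoped Classical

noncomputable section

abbrev V (m : ℕ) := Fin m → ZMod 2

/-- Integer dot product of two binary vectors (using {0,1} representatives). -/
def dotN {m : ℕ} (a b : V m) : ℕ := ∑ i, (a i).val * (b i).val

/-- The matrix `D(a,b)` with `D(a,b)|v⟩ = (−1)^{b·v}|v⊕a⟩`. -/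
def DM {m : ℕ} (a b : V m) : Matrix (V m) (V m) ℂ :=
  Matrix.of fun u v => if u = v + a then (-1 : ℂ) ^ dotN b v else 0

/-- The Hermitian Pauli `E(a,b) = i^{a·b mod 4} D(a,b)`, for `c = (a,b) ∈ F_2^{2m}`. -/
def EM {m : ℕ} (c : V m × V m) : Matrix (V m) (V m) ℂ :=
  Complex.I ^ dotN c.1 c.2 • DM c.1 c.2

/-- The Heisenberg–Weyl group `HW_N = {i^k D(a,b)}`, as a set of matrices. -/
def HW (m : ℕ) : Set (Matrix (V m) (V m) ℂ) :=
  {M | ∃ (k : Fin 4) (a b : V m), M = Complex.I ^ (k : ℕ) • DM a b}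

/-- A Clifford matrix: a unitary normalizing the Heisenberg–Weyl group. -/
def IsClifford {m : ℕ} (G : Matrix (V m) (V m) ℂ) : Prop :=
  G ∈ Matrix.unitaryGroup (V m) ℂ ∧ ∀ W ∈ HW m, G * W * Gᴴ ∈ HW m

/-- The (Pauli/Weyl) support of a matrix, identified with vectors in `F_2^{2m}`. -/
def supp {m : ℕ} (M : Matrix (V m) (V m) ℂ) : Set (V m × V m) :=
  {c | Matrix.trace ((EM c)ᴴ * M) ≠ 0}

/-- The symplectic inner product on `F_2^{2m}`. -/
def sympl {m : ℕ} (u v : V m × V m) : ZMod 2 :=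
  ∑ i, (u.1 i * v.2 i + u.2 i * v.1 i)

/-- The Clifford hierarchy; `CH m k` is the `(k+1)`-st level `C^(k+1)`, so
`CH m 0 = HW_N = C^(1)` and `C^(3) = CH m 2`. -/
def CH (m : ℕ) : ℕ → Set (Matrix (V m) (V m) ℂ)
  | 0 => HW m
  | k + 1 => {U | U ∈ Matrix.unitaryGroup (V m) ℂ ∧ ∀ W ∈ HW m, U * W * Uᴴ ∈ CH m k}


/-- ZMod 2 dot product. -/
def dotZ {m : ℕ} (a b : V m) : ZMod 2 := ∑ i, a i * b i

lemma dotN_cast {m : ℕ} (a b : V m) : ((dotN a b : ℕ) : ZMod 2) = dotZ a b := by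
  simp [dotN, dotZ, ZMod.natCast_val, ZMod.cast_id]

lemma dotZ_comm {m : ℕ} (a b : V m) : dotZ a b = dotZ b a := by
  simp [dotZ, mul_comm]

lemma dotZ_add_right {m : ℕ} (a b c : V m) : dotZ a (b + c) = dotZ a b + dotZ a c := by
  simp [dotZ, Pi.add_apply, mul_add, Finset.sum_add_distrib]

lemma dotZ_add_left {m : ℕ} (a b c : V m) : dotZ (a + b) c = dotZ a c + dotZ b c := by
  simp [dotZ, Pi.add_apply, add_mul, Finset.sum_add_distrib]

lemma neg_one_pow_mod (n : ℕ) : ((-1 : ℂ)) ^ n = (-1) ^ (n % 2) := by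
  conv_lhs => rw [← Nat.div_add_mod n 2]
  rw [pow_add, pow_mul]
  norm_num

lemma npc {n k : ℕ} (h : (n : ZMod 2) = (k : ZMod 2)) : ((-1 : ℂ)) ^ n = (-1) ^ k := by
  rw [neg_one_pow_mod n, neg_one_pow_mod k]
  have : n % 2 = k % 2 := by
    have hn := (ZMod.val_natCast (n := 2) n).symm
    have hk := (ZMod.val_natCast (n := 2) k).symm
    rw [hn, hk, h]
  rw [this]

lemma zmod2_add_self (x : ZMod 2) : x + x = 0 := by revert x; decide

/-- Product formula for `D` matrices. -/
lemma DM_mul {m : ℕ} (a b c d : V m) :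
    DM a b * DM c d = ((-1 : ℂ) ^ (dotN b c)) • DM (a + c) (b + d) := by
  ext u w
  simp only [DM, Matrix.mul_apply, Matrix.smul_apply, Matrix.of_apply, mul_ite, mul_zero,
    ite_mul, zero_mul, smul_eq_mul]
  rw [Finset.sum_ite_eq' Finset.univ (w + c)]
  simp only [Finset.mem_univ, if_true]
  have hcond : (u = w + c + a) ↔ (u = w + (a + c)) := by
    constructor <;> intro h <;> rw [h] <;> abel
  by_cases h : u = w + c + a
  · rw [if_pos h, if_pos (hcond.mp h), ← pow_add, ← pow_add]
    apply npc
    push_cast [dotN_cast]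
    rw [dotZ_add_right, dotZ_add_left]
    ring
  · rw [if_neg h, if_neg (fun h' => h (hcond.mpr h'))]

lemma V_add_self {m : ℕ} (a : V m) : a + a = 0 := by
  funext i; exact zmod2_add_self (a i)

lemma DM_zero {m : ℕ} : DM (0 : V m) (0 : V m) = 1 := by
  ext u w
  simp [DM, Matrix.one_apply, dotN, eq_comm]

/-- `E(c)` squares to the identity. -/
lemma EM_sq {m : ℕ} (c : V m × V m) : EM c * EM c = 1 := by
  rw [EM, smul_mul_assoc, mul_smul_comm, DM_mul, V_add_self, V_add_self, DM_zero,
    smul_smul, smul_smul]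
  have hscal : Complex.I ^ dotN c.1 c.2 * Complex.I ^ dotN c.1 c.2 * (-1 : ℂ) ^ dotN c.2 c.1
      = 1 := by
    rw [← mul_pow, Complex.I_mul_I, ← pow_add,
      npc (k := 0) (by push_cast [dotN_cast]; rw [dotZ_comm c.2 c.1]; exact zmod2_add_self _),
      pow_zero]
  rw [hscal, one_smul]

/-- Commutation relation for `E` matrices. -/
lemma EM_comm {m : ℕ} (c v : V m × V m) :
    EM v * EM c = ((-1 : ℂ) ^ (sympl c v).val) • (EM c * EM v) := by
  rw [EM, EM, smul_mul_assoc, mul_smul_comm, smul_mul_assoc, mul_smul_comm,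
    DM_mul, DM_mul]
  rw [smul_smul, smul_smul, smul_smul, smul_smul, smul_smul]
  rw [show v.1 + c.1 = c.1 + v.1 from add_comm _ _, show v.2 + c.2 = c.2 + v.2 from add_comm _ _]
  congr 1
  have h2 : ((-1 : ℂ)) ^ dotN v.2 c.1 = (-1) ^ (sympl c v).val * (-1) ^ dotN c.2 v.1 := by
    rw [← pow_add]
    apply npc
    push_cast [dotN_cast, ZMod.natCast_val, ZMod.cast_id]
    rw [show sympl c v = dotZ c.1 v.2 + dotZ c.2 v.1 from by
        simp [sympl, dotZ, Finset.sum_add_distrib],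
      dotZ_comm v.2 c.1, add_assoc, zmod2_add_self, add_zero]
  linear_combination (Complex.I ^ dotN c.1 c.2 * Complex.I ^ dotN v.1 v.2) * h2

/-- for a Clifford `G`, `supp(G) ⊆ C_G^{⊥s}`, where
`C_G = {v : G E(v) G† = E(v)}`: if `Tr(G E(c)) ≠ 0` then `⟨c,v⟩_s = 0` for all `v ∈ C_G`. -/
theorem stmt3 {m : ℕ} (hm : 1 ≤ m) (G : Matrix (V m) (V m) ℂ) (hG : IsClifford G)
    (c : V m × V m) (hc : Matrix.trace (G * EM c) ≠ 0) :
    ∀ v : V m × V m, G * EM v * Gᴴ = EM v → sympl c v = 0 := by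
  intro v hv
  have hGu : Gᴴ * G = 1 := by
    have := hG.1.1
    rwa [Matrix.star_eq_conjTranspose] at this
  -- G commutes with EM v
  have hcomm : G * EM v = EM v * G := by
    have h := congrArg (· * G) hv
    simpa [mul_assoc, hGu] using h
  set s : ℂ := (-1 : ℂ) ^ (sympl c v).val with hs
  have key : Matrix.trace (G * EM c) = s * Matrix.trace (G * EM c) := by
    calc Matrix.trace (G * EM c)
        = Matrix.trace ((EM v * EM v) * (G * EM c)) := by rw [EM_sq, one_mul]
      _ = Matrix.trace (EM v * (G * (EM v * EM c))) := by
          rw [show (EM v * EM v) * (G * EM c) = EM v * ((EM v * G) * EM c) by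
            simp only [mul_assoc], ← hcomm]
          simp only [mul_assoc]
      _ = Matrix.trace (EM v * (G * (s • (EM c * EM v)))) := by rw [EM_comm]
      _ = s * Matrix.trace ((EM v * (G * EM c)) * EM v) := by
          rw [Matrix.mul_smul, Matrix.mul_smul, Matrix.trace_smul, smul_eq_mul]
          simp only [mul_assoc]
      _ = s * Matrix.trace (EM v * (EM v * (G * EM c))) := by
          rw [Matrix.trace_mul_comm]
      _ = s * Matrix.trace (G * EM c) := by
          rw [show EM v * (EM v * (G * EM c)) = (EM v * EM v) * (G * EM c) by
            simp only [mul_assoc], EM_sq, one_mul]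
  have hs1 : s = 1 := by
    by_contra h
    apply hc
    have : (s - 1) * Matrix.trace (G * EM c) = 0 := by
      rw [sub_mul, one_mul, ← key, sub_self]
    rcases mul_eq_zero.mp this with h' | h'
    · exact absurd (sub_eq_zero.mp h') h
    · exact h'
  -- conclude sympl c v = 0
  by_contra hne
  have h1 : sympl c v = 1 := by
    have : ∀ x : ZMod 2, x ≠ 0 → x = 1 := by decide
    exact this _ hne
  rw [hs, h1, show ((1 : ZMod 2)).val = 1 from rfl] at hs1
  norm_num at hs1
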